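/- For nonzero vectors x, y, z in ℝ^{n+1}, define dist([x],[y]) = ‖x ∧ y‖ / (‖x‖·‖y‖), where ‖x ∧ y‖ is the norm of the wedge product for the standard Euclidean structure. Then dist satisfies the triangle inequality: dist([x],[z]) ≤ dist([x],[y]) + dist([y],[z]). -/
import Mathlib


open RealInnerProductSpace

set_option maxHeartbeats 1000000 in
lemma stmt7_aux (X Y Z a b c A B C : ℝ) (hX : 0 < X) (hY : 0 < Y) (hZ : 0 < Z)
    (hA : 0 ≤ A) (hB : 0 ≤ B) (hC : 0 ≤ C)
    (hA2 : A^2 = X^2*Y^2 - a^2) (hB2 : B^2 = Y^2*Z^2 - b^2)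
    (hC2 : C^2 = X^2*Z^2 - c^2) (hc2 : c^2 ≤ X^2*Z^2)
    (key : (a*b - c*Y^2)^2 ≤ A^2*B^2) :
    C/(X*Z) ≤ A/(X*Y) + B/(Y*Z) := by
  have hQ : 0 ≤ X*Z*(A*B) := by positivity
  have habs : c*(a*b - c*Y^2) ≤ X*Z*(A*B) := by
    have h2 := mul_le_mul key hc2 (sq_nonneg c)
      (by positivity : (0:ℝ) ≤ A^2*B^2)
    have hsq : (c*(a*b - c*Y^2))^2 ≤ (X*Z*(A*B))^2 := by nlinarith [h2]
    nlinarith [hsq, hQ, sq_nonneg (c*(a*b - c*Y^2) - X*Z*(A*B))]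
  have main : C*Y ≤ A*Z + B*X := by
    rw [hA2, hB2] at key
    have hT : 0 ≤ ((X^2*Y^2 - a^2)*Z^2 + (Y^2*Z^2 - b^2)*X^2
        - (X^2*Z^2 - c^2)*Y^2 + 2*(X*Z*(A*B))) * Y^2 := by
      nlinarith [key, mul_le_mul_of_nonneg_left habs (sq_nonneg Y)]
    have hT' : 0 ≤ (X^2*Y^2 - a^2)*Z^2 + (Y^2*Z^2 - b^2)*X^2
        - (X^2*Z^2 - c^2)*Y^2 + 2*(X*Z*(A*B)) := by
      nlinarith [hT, pow_pos hY 2]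
    have e : (A*Z + B*X)^2 - (C*Y)^2 = (X^2*Y^2 - a^2)*Z^2 + (Y^2*Z^2 - b^2)*X^2
        - (X^2*Z^2 - c^2)*Y^2 + 2*(X*Z*(A*B)) := by
      rw [← hA2, ← hB2, ← hC2]; ring
    rw [← e] at hT'
    have hsq : (C*Y)^2 ≤ (A*Z + B*X)^2 := by linarith
    nlinarith [hsq, sq_nonneg (C*Y - (A*Z + B*X)),
      mul_nonneg hA hZ.le, mul_nonneg hB hX.le, mul_nonneg hC hY.le]
  rw [div_add_div _ _ (by positivity) (by positivity),
    div_le_div_iff₀ (by positivity) (by positivity)]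
  nlinarith [mul_le_mul_of_nonneg_left main
      (by positivity : (0:ℝ) ≤ X*Y*Z), mul_pos hX hZ, mul_pos hX hY, mul_pos hY hZ]


set_option maxHeartbeats 1000000 in
/-- The projective distance `dist([x],[y]) = ‖x ∧ y‖/(‖x‖‖y‖)`, where
`‖x ∧ y‖ = √(‖x‖²‖y‖² - ⟪x,y⟫²)`, satisfies the triangle inequality. -/
theorem stmt7 (n : ℕ) (x y z : EuclideanSpace ℝ (Fin (n + 1)))
    (hx : x ≠ 0) (hy : y ≠ 0) (hz : z ≠ 0) :
    Real.sqrt (‖x‖ ^ 2 * ‖z‖ ^ 2 - ⟪x, z⟫ ^ 2) / (‖x‖ * ‖z‖) ≤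
      Real.sqrt (‖x‖ ^ 2 * ‖y‖ ^ 2 - ⟪x, y⟫ ^ 2) / (‖x‖ * ‖y‖) +
      Real.sqrt (‖y‖ ^ 2 * ‖z‖ ^ 2 - ⟪y, z⟫ ^ 2) / (‖y‖ * ‖z‖) := by
  have hX : (0:ℝ) < ‖x‖ := norm_pos_iff.mpr hx
  have hY : (0:ℝ) < ‖y‖ := norm_pos_iff.mpr hy
  have hZ : (0:ℝ) < ‖z‖ := norm_pos_iff.mpr hz
  have hyx : ⟪y, x⟫ = ⟪x, y⟫ := real_inner_comm x y
  have hzy : ⟪z, y⟫ = ⟪y, z⟫ := real_inner_comm y z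
  have hzx : ⟪z, x⟫ = ⟪x, z⟫ := real_inner_comm x z
  have cs_xy := real_inner_mul_inner_self_le x y
  have cs_yz := real_inner_mul_inner_self_le y z
  have cs_xz := real_inner_mul_inner_self_le x z
  simp only [real_inner_self_eq_norm_sq] at cs_xy cs_yz cs_xz
  have hkey := real_inner_mul_inner_self_le
    ((‖y‖^2 : ℝ) • x - ⟪x, y⟫ • y) ((‖y‖^2 : ℝ) • z - ⟪y, z⟫ • y)
  simp only [inner_sub_left, inner_sub_right, real_inner_smul_left,
    real_inner_smul_right, real_inner_self_eq_norm_sq, hyx, hzy, hzx, norm_smul,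
    Real.norm_eq_abs, mul_pow, sq_abs] at hkey
  have hA0 : (0:ℝ) ≤ ‖x‖ ^ 2 * ‖y‖ ^ 2 - ⟪x, y⟫ ^ 2 := by nlinarith
  have hB0 : (0:ℝ) ≤ ‖y‖ ^ 2 * ‖z‖ ^ 2 - ⟪y, z⟫ ^ 2 := by nlinarith
  have hC0 : (0:ℝ) ≤ ‖x‖ ^ 2 * ‖z‖ ^ 2 - ⟪x, z⟫ ^ 2 := by nlinarith
  have hY2 : (0:ℝ) < ‖y‖^2 := by positivity
  refine stmt7_aux ‖x‖ ‖y‖ ‖z‖ ⟪x, y⟫ ⟪y, z⟫ ⟪x, z⟫ _ _ _ hX hY hZ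
    (Real.sqrt_nonneg _) (Real.sqrt_nonneg _) (Real.sqrt_nonneg _)
    (Real.sq_sqrt hA0) (Real.sq_sqrt hB0) (Real.sq_sqrt hC0)
    (by nlinarith) ?_
  rw [Real.sq_sqrt hA0, Real.sq_sqrt hB0]
  nlinarith [hkey, mul_pos (mul_pos hY2 hY2) hY2, sq_nonneg (‖y‖^2)]
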